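/- Let G be a group generated by a set S, and for d ≥ 1 let B_d denote the closed ball of radius d about the identity in the word metric on G determined by S (i.e., the set of elements expressible as products of at most d elements of S ∪ S⁻¹). Let H ≤ G be a subgroup such that B_d ⊆ g₁H ∪ … ∪ g_dH for some elements g₁,…,g_d ∈ G. Then H has index at most d in G. -/

import Mathlib

open Set

universe u

variable {M : Type*}

/-- The axioms of a median algebra for a ternary operation `med`. -/
def IsMedianAlgebra (med : M → M → M → M) : Prop :=
  (∀ x y : M, med x x y = x) ∧
  (∀ x y z : M, med x y z = med y x z) ∧
  (∀ x y z : M, med x y z = med x z y) ∧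
  (∀ x y z w : M, med (med x y z) y w = med x y (med z y w))

/-- A subset `C` is convex if it contains `med x y z` whenever `x, y ∈ C`. -/
def MConvex (med : M → M → M → M) (C : Set M) : Prop :=
  ∀ x ∈ C, ∀ y ∈ C, ∀ z : M, med x y z ∈ C

/-- A halfspace: a nonempty convex set with nonempty convex complement. -/
def IsHalfspace (med : M → M → M → M) (h : Set M) : Prop :=
  h.Nonempty ∧ hᶜ.Nonempty ∧ MConvex med h ∧ MConvex med hᶜ

/-- Two halfspaces are transverse if all four corner intersections are nonempty. -/
def TransverseHS (h k : Set M) : Prop :=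
  (h ∩ k).Nonempty ∧ (h ∩ kᶜ).Nonempty ∧ (hᶜ ∩ k).Nonempty ∧ (hᶜ ∩ kᶜ).Nonempty

/-- Two halfspaces are facing if `hᶜ ∩ kᶜ = ∅` and `h ≠ kᶜ`. -/
def FacingHS (h k : Set M) : Prop := hᶜ ∩ kᶜ = ∅ ∧ h ≠ kᶜ

/-- The coordinatewise majority median on the `k`-cube `{0,1}^k`. -/
def cubeMed (k : ℕ) (x y z : Fin k → Bool) : Fin k → Bool :=
  fun i => (x i && y i) || (x i && z i) || (y i && z i)

/-- `M` contains a median subalgebra isomorphic to the `k`-cube. -/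
def CubeEmbeds (med : M → M → M → M) (k : ℕ) : Prop :=
  ∃ φ : (Fin k → Bool) → M, Function.Injective φ ∧
    ∀ x y z : Fin k → Bool, φ (cubeMed k x y z) = med (φ x) (φ y) (φ z)

/-- The rank of `(M, med)` is at most `r`. -/
def RankLE (med : M → M → M → M) (r : ℕ) : Prop :=
  ∀ k : ℕ, CubeEmbeds med k → k ≤ r

/-- `(M, med)` has finite rank. -/
def FiniteRank (med : M → M → M → M) : Prop := ∃ r : ℕ, RankLE med r

/-- A wall is an unordered pair `{h, hᶜ}` where `h` is a halfspace. -/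
def IsWall (med : M → M → M → M) (w : Set (Set M)) : Prop :=
  ∃ h : Set M, IsHalfspace med h ∧ w = {h, hᶜ}

/-- Two walls are transverse if they bound transverse halfspaces. -/
def TransverseWalls (w₁ w₂ : Set (Set M)) : Prop :=
  ∃ h ∈ w₁, ∃ k ∈ w₂, TransverseHS h k

/-- The set of walls separating `x` from `y`. -/
def WallsSep (med : M → M → M → M) (x y : M) : Set (Set (Set M)) :=
  {w | IsWall med w ∧ ∃ h ∈ w, x ∈ h ∧ y ∉ h}

/-- The interval between `x` and `y`. -/
def mInterval (med : M → M → M → M) (x y : M) : Set M := {z | med x y z = z}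

/-- A permutation of `M` is a median automorphism if it preserves `med`. -/
def IsMedianAuto (med : M → M → M → M) (f : Equiv.Perm M) : Prop :=
  ∀ x y z : M, f (med x y z) = med (f x) (f y) (f z)

/-- The minimal set of a median automorphism `f`: points `x` for which the wall
sets `W(fⁿ x | fⁿ⁺¹ x)`, `n ∈ ℤ`, are pairwise disjoint. -/
def MinSet (med : M → M → M → M) (f : Equiv.Perm M) : Set M :=
  {x | ∀ m n : ℤ, m ≠ n →
    Disjoint (WallsSep med ((f ^ m) x) ((f ^ (m + 1)) x))
             (WallsSep med ((f ^ n) x) ((f ^ (n + 1)) x))}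

/-- The cyclic group generated by `f` acts without wall inversions. -/
def NoWallInversionsZ (med : M → M → M → M) (f : Equiv.Perm M) : Prop :=
  ∀ (n : ℤ) (h : Set M), IsHalfspace med h → ⇑(f ^ n) '' h ≠ hᶜ

/-- `f` acts non-transversely: no wall `w` is transverse to `f w`. -/
def NonTransverseAuto (med : M → M → M → M) (f : Equiv.Perm M) : Prop :=
  ∀ w : Set (Set M), IsWall med w → ¬ TransverseWalls ((fun s => ⇑f '' s) '' w) w

/-- The set `H₁(⟨f⟩)` of halfspaces `h` with `fⁿ h ⊊ h` for some `n ∈ ℤ`. -/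
def H1Z (med : M → M → M → M) (f : Equiv.Perm M) : Set (Set M) :=
  {h | IsHalfspace med h ∧ ∃ n : ℤ, ⇑(f ^ n) '' h ⊂ h}

/-- The set `H̄_{1/2}(⟨f⟩)`: halfspaces not in `H₁` admitting a facing translate. -/
def HbarHalfZ (med : M → M → M → M) (f : Equiv.Perm M) : Set (Set M) :=
  {h | IsHalfspace med h ∧ (¬ ∃ n : ℤ, ⇑(f ^ n) '' h ⊂ h) ∧
    ∃ n : ℤ, FacingHS (⇑(f ^ n) '' h) h}

/-- The reduced core `C̄(f)` of the action of `⟨f⟩`. -/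
def reducedCoreZ (med : M → M → M → M) (f : Equiv.Perm M) : Set M :=
  ⋂₀ HbarHalfZ med f

/-- The set `H⁺`: halfspaces `h` with `fⁿ h ⊊ h` for some `n ≥ 1`. -/
def HplusZ (med : M → M → M → M) (f : Equiv.Perm M) : Set (Set M) :=
  {h | IsHalfspace med h ∧ ∃ n : ℤ, 0 < n ∧ ⇑(f ^ n) '' h ⊂ h}

/-- The set `H⁻`: halfspaces `h` with `h ⊊ fⁿ h` for some `n ≥ 1`. -/
def HminusZ (med : M → M → M → M) (f : Equiv.Perm M) : Set (Set M) :=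
  {h | IsHalfspace med h ∧ ∃ n : ℤ, 0 < n ∧ h ⊂ ⇑(f ^ n) '' h}

/-- A group action on `M` by median automorphisms. -/
def MedianAction (G : Type*) [Group G] [MulAction G M]
    (med : M → M → M → M) : Prop :=
  ∀ (g : G) (x y z : M), g • med x y z = med (g • x) (g • y) (g • z)

/-- The action of `G` has no wall inversions. -/
def NoWallInversions (G : Type*) [Group G] [MulAction G M]
    (med : M → M → M → M) : Prop :=
  ∀ (g : G) (h : Set M), IsHalfspace med h → (fun x : M => g • x) '' h ≠ hᶜ

/-- The `G`-orbit of the set `h` is finite. -/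
def FiniteOrbitHS (G : Type*) [Group G] [MulAction G M] (h : Set M) : Prop :=
  {s : Set M | ∃ g : G, s = (fun x : M => g • x) '' h}.Finite

/-- The set `H₁(G)` of halfspaces `h` with `g h ⊊ h` for some `g ∈ G`. -/
def H1G (G : Type*) [Group G] [MulAction G M] (med : M → M → M → M) :
    Set (Set M) :=
  {h | IsHalfspace med h ∧ ∃ g : G, (fun x : M => g • x) '' h ⊂ h}

/-- The set `H_{1/2}(G)`: halfspaces with infinite orbit all of whose translates
are facing, transverse or equal to them. -/
def HhalfG (G : Type*) [Group G] [MulAction G M] (med : M → M → M → M) :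
    Set (Set M) :=
  {h | IsHalfspace med h ∧ ¬ FiniteOrbitHS G h ∧
    ∀ g : G, FacingHS ((fun x : M => g • x) '' h) h ∨
      TransverseHS ((fun x : M => g • x) '' h) h ∨ (fun x : M => g • x) '' h = h}

/-- The set `H̄_{1/2}(G)`: halfspaces not in `H₁(G)` admitting a facing translate. -/
def HbarHalfG (G : Type*) [Group G] [MulAction G M] (med : M → M → M → M) :
    Set (Set M) :=
  {h | IsHalfspace med h ∧ (¬ ∃ g : G, (fun x : M => g • x) '' h ⊂ h) ∧
    ∃ g : G, FacingHS ((fun x : M => g • x) '' h) h}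

/-- The convex core `C(G)`: intersection of all halfspaces in `H_{1/2}(G)`. -/
def coreG (G : Type*) [Group G] [MulAction G M] (med : M → M → M → M) : Set M :=
  ⋂₀ HhalfG G med

/-- The reduced convex core `C̄(G)`. -/
def reducedCoreG (G : Type*) [Group G] [MulAction G M]
    (med : M → M → M → M) : Set M :=
  ⋂₀ HbarHalfG G med

/-- The action is essential: every halfspace is strictly shrunk by some `g`. -/
def EssentialAction (G : Type*) [Group G] [MulAction G M]
    (med : M → M → M → M) : Prop :=
  ∀ h : Set M, IsHalfspace med h → ∃ g : G, (fun x : M => g • x) '' h ⊂ h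

/-- The action is minimal: no `G`-invariant convex subset other than `∅` and `M`. -/
def MinimalAction (G : Type*) [Group G] [MulAction G M]
    (med : M → M → M → M) : Prop :=
  ∀ C : Set M, MConvex med C → (∀ g : G, (fun x : M => g • x) '' C = C) →
    C = ∅ ∨ C = Set.univ

/-- A compatible pseudo-metric on the median algebra `(M, med)`. -/
def IsCompatPseudoMetric (med : M → M → M → M) (η : M → M → ℝ) : Prop :=
  (∀ x : M, η x x = 0) ∧ (∀ x y : M, η x y = η y x) ∧
  (∀ x y z : M, η x z ≤ η x y + η y z) ∧ (∀ x y : M, 0 ≤ η x y) ∧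
  (∀ x y z : M, η x y = η x (med x y z) + η (med x y z) y)

/-- A compatible metric on the median algebra `(M, med)`. -/
def IsCompatMetric (med : M → M → M → M) (η : M → M → ℝ) : Prop :=
  IsCompatPseudoMetric med η ∧ ∀ x y : M, η x y = 0 → x = y

/-- The translation length of `f` with respect to `η`. -/
noncomputable def transLen (f : Equiv.Perm M) (η : M → M → ℝ) : ℝ :=
  ⨅ x : M, η x (f x)

/-- An ultrafilter of halfspaces. -/
def IsUltrafilterHS (med : M → M → M → M) (σ : Set (Set M)) : Prop :=
  (∀ h ∈ σ, IsHalfspace med h) ∧ (∀ h ∈ σ, ∀ k ∈ σ, (h ∩ k).Nonempty) ∧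
  ∀ h : Set M, IsHalfspace med h → (h ∈ σ ↔ hᶜ ∉ σ)

/-- A median (metric) space: unique median points. -/
def IsMedianSpace (X : Type*) [MetricSpace X] : Prop :=
  ∀ x y z : X, ∃! m : X,
    dist x y = dist x m + dist m y ∧ dist x z = dist x m + dist m z ∧
    dist y z = dist y m + dist m z

/-- `med` is the median operation of the median space `X`. -/
def IsMedianMap (X : Type*) [MetricSpace X] (med : X → X → X → X) : Prop :=
  ∀ x y z : X,
    dist x y = dist x (med x y z) + dist (med x y z) y ∧
    dist x z = dist x (med x y z) + dist (med x y z) z ∧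
    dist y z = dist y (med x y z) + dist (med x y z) z

/-- A geodesic metric space. -/
def IsGeodesicSpace (X : Type*) [MetricSpace X] : Prop :=
  ∀ x y : X, ∃ γ : ℝ → X, γ 0 = x ∧ γ (dist x y) = y ∧
    ∀ s ∈ Set.Icc (0:ℝ) (dist x y), ∀ t ∈ Set.Icc (0:ℝ) (dist x y),
      dist (γ s) (γ t) = |s - t|

/-- The ball of radius `d` about the identity in the word metric given by `S`. -/
def wordBall {G : Type*} [Group G] (S : Set G) (d : ℕ) : Set G :=
  {g | ∃ l : List G, l.length ≤ d ∧ (∀ x ∈ l, x ∈ S ∨ x⁻¹ ∈ S) ∧ l.prod = g}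

/-- If the `d`-ball of a Cayley graph of `G` is covered by `d` left
cosets of `H`, then `H` has index at most `d` in `G`. -/
theorem index_le_of_ball_covered {G : Type*} [Group G] (S : Set G)
    (hS : Subgroup.closure S = ⊤) (d : ℕ) (hd : 1 ≤ d) (H : Subgroup G)
    (g : Fin d → G)
    (hcov : wordBall S d ⊆ ⋃ i : Fin d, (fun x => g i * x) '' (H : Set G)) :
    H.index ≠ 0 ∧ H.index ≤ d := by

  classical
  set f : G → G ⧸ H := fun x => ((x⁻¹ : G) : G ⧸ H) with hf
  have hfeq : ∀ x y : G, f x = f y ↔ x * y⁻¹ ∈ H := by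
    intro x y
    simp only [hf, QuotientGroup.eq, inv_inv]
  -- basic ball facts
  have hmono : ∀ {m n : ℕ}, m ≤ n → wordBall S m ⊆ wordBall S n := by
    rintro m n hmn x ⟨l, hl, hx, hp⟩
    exact ⟨l, hl.trans hmn, hx, hp⟩
  have hone : ∀ n, (1 : G) ∈ wordBall S n := fun n =>
    ⟨[], by simp, by simp, List.prod_nil⟩
  have hmul : ∀ {n : ℕ} {y s : G}, y ∈ wordBall S n → (s ∈ S ∨ s⁻¹ ∈ S) →
      y * s ∈ wordBall S (n + 1) := by
    rintro n y s ⟨l, hl, hx, hp⟩ hs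
    refine ⟨l ++ [s], ?_, ?_, ?_⟩
    · simpa using Nat.succ_le_succ hl
    · intro x hx'
      rcases List.mem_append.mp hx' with h' | h'
      · exact hx x h'
      · simp only [List.mem_singleton] at h'; subst h'; exact hs
    · simp [hp]
  have hstep : ∀ {n : ℕ} {x : G}, x ∈ wordBall S (n + 1) →
      x ∈ wordBall S n ∨ ∃ y ∈ wordBall S n, ∃ s, (s ∈ S ∨ s⁻¹ ∈ S) ∧ x = y * s := by
    rintro n x ⟨l, hl, hx, hp⟩
    rcases l.eq_nil_or_concat with rfl | ⟨l', a, rfl⟩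
    · exact Or.inl ⟨[], Nat.zero_le _, by simp, hp⟩
    · simp only [List.concat_eq_append] at hl hx hp
      right
      refine ⟨l'.prod, ⟨l', ?_, fun z hz => hx z (List.mem_append.mpr (Or.inl hz)), rfl⟩,
        a, hx a (by simp), ?_⟩
      · have := hl; simpa [Nat.succ_le_succ_iff] using this
      · rw [← hp]; simp
  have hsymm : ∀ {n : ℕ} {x : G}, x ∈ wordBall S n → x⁻¹ ∈ wordBall S n := by
    rintro n x ⟨l, hl, hx, hp⟩
    refine ⟨(l.map fun z => z⁻¹).reverse, by simpa using hl, ?_, by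
      rw [← hp, List.prod_inv_reverse]⟩
    intro z hz
    simp only [List.mem_reverse, List.mem_map] at hz
    obtain ⟨w, hw, rfl⟩ := hz
    rcases hx w hw with h' | h'
    · exact Or.inr (by simpa using h')
    · exact Or.inl h'
  -- every element lies in some ball
  have hcl : ∀ x : G, ∃ n, x ∈ wordBall S n := by
    intro x
    have hx : x ∈ Subgroup.closure S := hS ▸ Subgroup.mem_top x
    have hx' : x ∈ (Subgroup.closure S).toSubmonoid := hx
    rw [Subgroup.closure_toSubmonoid] at hx'
    obtain ⟨l, hl, hp⟩ := Submonoid.exists_list_of_mem_closure hx'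
    refine ⟨l.length, l, le_rfl, ?_, hp⟩
    intro z hz
    rcases hl z hz with h' | h'
    · exact Or.inl h'
    · exact Or.inr (by simpa using h')
  -- stabilization lemma
  have key : ∀ n : ℕ, f '' wordBall S (n + 1) ⊆ f '' wordBall S n →
      ∀ m : ℕ, f '' wordBall S m ⊆ f '' wordBall S n := by
    intro n hsub m
    induction m with
    | zero =>
      exact Set.image_mono (f := f) (hmono (Nat.zero_le _))
    | succ m ih =>
      rintro q ⟨x, hx, rfl⟩
      rcases hstep hx with h' | ⟨y, hy, s, hs, rfl⟩
      · exact ih ⟨x, h', rfl⟩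
      · obtain ⟨y', hy', hyy⟩ := ih ⟨y, hy, rfl⟩
        have : f (y' * s) = f (y * s) := by
          rw [hfeq]
          have : y' * y⁻¹ ∈ H := (hfeq y' y).mp hyy
          simpa [mul_assoc] using this
        exact hsub ⟨y' * s, hmul hy' hs, this⟩
  -- the covering set in the quotient
  set N : Set (G ⧸ H) := Set.range (fun i : Fin d => ((g i : G) : G ⧸ H)) with hN
  have hNfin : N.Finite := Set.finite_range _
  have hNcard : N.ncard ≤ d := by
    have he : N = (fun i : Fin d => ((g i : G) : G ⧸ H)) '' Set.univ := Set.image_univ.symm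
    rw [he]
    have := Set.ncard_image_le (f := fun i : Fin d => ((g i : G) : G ⧸ H))
      (s := (Set.univ : Set (Fin d))) Set.finite_univ
    simpa [Set.ncard_univ] using this
  have hcovQ : f '' wordBall S d ⊆ N := by
    rintro q ⟨x, hx, rfl⟩
    have hxi : x⁻¹ ∈ wordBall S d := hsymm hx
    obtain ⟨i, hi⟩ := Set.mem_iUnion.mp (hcov hxi)
    obtain ⟨h, hh, hgh⟩ := hi
    refine ⟨i, ?_⟩
    simp only [hf]
    rw [← hgh, QuotientGroup.eq]
    simpa using (inv_mem hh : h⁻¹ ∈ H)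
  by_cases hA : ∃ n < d, f '' wordBall S (n + 1) ⊆ f '' wordBall S n
  · obtain ⟨n, hn, hsub⟩ := hA
    have huniv : (Set.univ : Set (G ⧸ H)) ⊆ f '' wordBall S n := by
      rintro q -
      obtain ⟨a, rfl⟩ := QuotientGroup.mk_surjective q
      obtain ⟨m, hm⟩ := hcl a⁻¹
      exact key n hsub m ⟨a⁻¹, hm, by simp [hf]⟩
    have huniv' : (Set.univ : Set (G ⧸ H)) ⊆ N :=
      huniv.trans ((Set.image_mono (f := f) (hmono hn.le)).trans hcovQ)
    have hfinQ : Finite (G ⧸ H) :=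
      Set.finite_univ_iff.mp (hNfin.subset huniv')
    constructor
    · have : Nat.card (G ⧸ H) ≠ 0 := Nat.card_ne_zero.mpr ⟨⟨((1:G) : G ⧸ H)⟩, hfinQ⟩
      simpa [Subgroup.index] using this
    · have h1 : Nat.card (G ⧸ H) = (Set.univ : Set (G ⧸ H)).ncard :=
        (Set.ncard_univ _).symm
      have h2 : (Set.univ : Set (G ⧸ H)).ncard ≤ N.ncard :=
        Set.ncard_le_ncard huniv' hNfin
      calc H.index = Nat.card (G ⧸ H) := rfl
        _ ≤ N.ncard := h1 ▸ h2
        _ ≤ d := hNcard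
  · push_neg at hA
    exfalso
    have hgrow : ∀ n ≤ d, n + 1 ≤ (f '' wordBall S n).ncard := by
      intro n
      induction n with
      | zero =>
        intro _
        have hne : (f '' wordBall S 0).Nonempty := ⟨f 1, 1, hone 0, rfl⟩
        have hfin : (f '' wordBall S 0).Finite :=
          hNfin.subset ((Set.image_mono (f := f) (hmono (Nat.zero_le d))).trans hcovQ)
        have := (Set.ncard_pos hfin).mpr hne
        omega
      | succ n ih =>
        intro hnd
        have hn : n < d := hnd
        have hss : f '' wordBall S n ⊂ f '' wordBall S (n + 1) :=
          ⟨Set.image_mono (f := f) (hmono (Nat.le_succ n)), hA n hn⟩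
        have hfin : (f '' wordBall S (n + 1)).Finite :=
          hNfin.subset ((Set.image_mono (f := f) (hmono hnd)).trans hcovQ)
        have := Set.ncard_lt_ncard hss hfin
        have := ih hn.le
        omega
    have h1 : d + 1 ≤ (f '' wordBall S d).ncard := hgrow d le_rfl
    have h2 : (f '' wordBall S d).ncard ≤ N.ncard := Set.ncard_le_ncard hcovQ hNfin
    omega
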